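/- Let (X, μ) be a σ-finite measure space and u ∈ L^{2,∞}(X) a measurable function. Suppose A ⊂ X is measurable with μ(A) ≤ C₀ e^{2ρR} and that |u| ≤ C₁ ‖u‖_{2,∞} e^{αR} on A, for constants C₀, C₁, ρ, α > 0 and R ≥ 1. Then ∫_A |u|² dμ ≤ C ‖u‖²_{2,∞} R, where C depends only on C₀, C₁, ρ, α. -/

import Mathlib

open MeasureTheory Set
open scoped ENNReal

theorem aux_integral (W a t₀ B : ℝ) (hW : 0 < W) (ha : 0 < a) (ht₀ : 0 < t₀) (hB : 1 ≤ B)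
    (hat : a * t₀ = W ^ 2) :
    (∫⁻ t in Ioi (0:ℝ),
        ((Ioc (0:ℝ) t₀).indicator (fun _ => ENNReal.ofReal a) t
          + (Ioc t₀ (t₀ * B)).indicator (fun t => ENNReal.ofReal (W ^ 2 / t)) t))
      ≤ ENNReal.ofReal (W ^ 2 + W ^ 2 * Real.log B) := by
  have hle : t₀ ≤ t₀ * B := le_mul_of_one_le_right ht₀.le hB
  calc (∫⁻ t in Ioi (0:ℝ), ((Ioc (0:ℝ) t₀).indicator (fun _ => ENNReal.ofReal a) t
          + (Ioc t₀ (t₀ * B)).indicator (fun t => ENNReal.ofReal (W ^ 2 / t)) t))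
      ≤ ∫⁻ t, ((Ioc (0:ℝ) t₀).indicator (fun _ => ENNReal.ofReal a) t
          + (Ioc t₀ (t₀ * B)).indicator (fun t => ENNReal.ofReal (W ^ 2 / t)) t) :=
        setLIntegral_le_lintegral _ _
    _ = (∫⁻ t, (Ioc (0:ℝ) t₀).indicator (fun _ => ENNReal.ofReal a) t)
          + ∫⁻ t, (Ioc t₀ (t₀ * B)).indicator (fun t => ENNReal.ofReal (W ^ 2 / t)) t := by
        rw [lintegral_add_left]
        exact measurable_const.indicator measurableSet_Ioc
    _ ≤ ENNReal.ofReal (W ^ 2) + ENNReal.ofReal (W ^ 2 * Real.log B) := by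
        gcongr
        · rw [lintegral_indicator measurableSet_Ioc, setLIntegral_const,
            Real.volume_Ioc, ← ENNReal.ofReal_mul ha.le, sub_zero, hat]
        · rw [lintegral_indicator measurableSet_Ioc]
          have hcont : ContinuousOn (fun t : ℝ => W ^ 2 / t) (Icc t₀ (t₀ * B)) := by
            refine continuousOn_const.div continuousOn_id fun x hx => ?_
            exact ne_of_gt (lt_of_lt_of_le ht₀ hx.1)
          have hint : IntegrableOn (fun t : ℝ => W ^ 2 / t) (Ioc t₀ (t₀ * B)) :=
            (hcont.integrableOn_Icc).mono_set Ioc_subset_Icc_self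
          rw [← ofReal_integral_eq_lintegral_ofReal hint
            ((ae_restrict_iff' measurableSet_Ioc).mpr (ae_of_all _ fun t ht =>
              div_nonneg (sq_nonneg W) (le_of_lt (ht₀.trans ht.1))))]
          apply ENNReal.ofReal_le_ofReal
          rw [← intervalIntegral.integral_of_le hle]
          have h1 : ∫ t in t₀..(t₀ * B), W ^ 2 / t = W ^ 2 * ∫ t in t₀..(t₀ * B), 1 / t := by
            simp only [div_eq_mul_inv, one_div, intervalIntegral.integral_const_mul, one_mul]
          rw [h1, integral_one_div (by
            intro h
            have h2 := h.1
            simp only [inf_le_iff] at h2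
            rcases h2 with h' | h' <;> nlinarith)]
          rw [mul_div_cancel_left₀ _ (ne_of_gt ht₀)]
    _ = ENNReal.ofReal (W ^ 2 + W ^ 2 * Real.log B) := by
        rw [← ENNReal.ofReal_add (by positivity)
          (mul_nonneg (sq_nonneg W) (Real.log_nonneg hB))]

set_option maxHeartbeats 1000000 in
/-- If `u` has weak-L² norm at most `W`, `A` has measure at most `C₀ e^{2ρR}` and
`|u| ≤ C₁ W e^{αR}` on `A`, then `∫_A |u|² dμ ≤ C W² R`, with `C` depending only on
`C₀, C₁, ρ, α`. -/
theorem stmt6 (C₀ C₁ ρ α : ℝ) (hC₀ : 0 < C₀) (hC₁ : 0 < C₁) (hρ : 0 < ρ) (hα : 0 < α) :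
    ∃ C : ℝ, 0 < C ∧
      ∀ (X : Type) (mX : MeasurableSpace X) (μ : Measure X), SigmaFinite μ →
      ∀ (u : X → ℂ), Measurable u →
      ∀ (W : ℝ), 0 ≤ W →
      (∀ s : ℝ, 0 < s → μ {x | s < ‖u x‖} ≤ ENNReal.ofReal (W ^ 2 / s ^ 2)) →
      ∀ (A : Set X), MeasurableSet A →
      ∀ R : ℝ, 1 ≤ R →
      μ A ≤ ENNReal.ofReal (C₀ * Real.exp (2 * ρ * R)) →
      (∀ x ∈ A, ‖u x‖ ≤ C₁ * W * Real.exp (α * R)) →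
      (∫⁻ x in A, ENNReal.ofReal (‖u x‖ ^ 2) ∂μ)
        ≤ ENNReal.ofReal (C * W ^ 2 * R) := by
  have hL : 0 ≤ Real.log (1 + C₀ * C₁ ^ 2) := Real.log_nonneg (by nlinarith)
  refine ⟨1 + Real.log (1 + C₀ * C₁ ^ 2) + 2 * α + 2 * ρ, by linarith, ?_⟩
  intro X mX μ hσ u hu W hW hweak A hA R hR hμA hbd
  rcases eq_or_lt_of_le hW with hW0 | hWpos
  · -- W = 0 : u vanishes on A
    have h0 : (∫⁻ x in A, ENNReal.ofReal (‖u x‖ ^ 2) ∂μ) = 0 := by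
      rw [← lintegral_zero (μ := μ.restrict A)]
      refine setLIntegral_congr_fun_ae hA (ae_of_all _ fun x hx => ?_)
      have h1 := hbd x hx
      rw [← hW0] at h1
      have h2 : ‖u x‖ = 0 :=
        le_antisymm (by simpa using h1) (norm_nonneg _)
      simp [h2]
    rw [h0]
    exact zero_le
  · -- W > 0
    set a := C₀ * Real.exp (2 * ρ * R) with hadef
    have ha : 0 < a := by positivity
    set t₀ := W ^ 2 / a with ht₀def
    have ht₀ : 0 < t₀ := by positivity
    have hat : a * t₀ = W ^ 2 := by
      rw [ht₀def]; field_simp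
    set B := (1 + C₀ * C₁ ^ 2) * Real.exp ((2 * α + 2 * ρ) * R) with hBdef
    have hB1 : 1 ≤ B := by
      have h1 : (1 : ℝ) ≤ Real.exp ((2 * α + 2 * ρ) * R) :=
        Real.one_le_exp (by nlinarith)
      have h2 : (1:ℝ) * 1 ≤ (1 + C₀ * C₁ ^ 2) * Real.exp ((2 * α + 2 * ρ) * R) :=
        mul_le_mul (by nlinarith) h1 one_pos.le (by nlinarith)
      simpa using h2
    set M := C₁ * W * Real.exp (α * R) with hMdef
    have hM : 0 < M := by positivity
    have hexp : Real.exp ((2 * α + 2 * ρ) * R)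
        = Real.exp (α * R) ^ 2 * Real.exp (2 * ρ * R) := by
      rw [← Real.exp_nat_mul, ← Real.exp_add]; ring_nf
    have hM2 : M ^ 2 ≤ t₀ * B := by
      have key : t₀ * B = W ^ 2 * (1 + C₀ * C₁ ^ 2) / C₀ * Real.exp (α * R) ^ 2 := by
        rw [ht₀def, hBdef, hadef, hexp]; field_simp
      rw [key, hMdef]
      have h1 : 0 < Real.exp (α * R) ^ 2 := by positivity
      rw [div_mul_eq_mul_div, le_div_iff₀ hC₀]
      nlinarith
    have hmeas : Measurable fun x => ‖u x‖ ^ 2 := by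
      have := hu.norm.pow_const 2
      simpa using this
    -- layer cake
    have hlayer : (∫⁻ x in A, ENNReal.ofReal (‖u x‖ ^ 2) ∂μ)
        = ∫⁻ t in Ioi (0:ℝ), (μ.restrict A) {x | t < ‖u x‖ ^ 2} :=
      lintegral_eq_lintegral_meas_lt (μ.restrict A)
        (ae_of_all _ fun x => by positivity) hmeas.aemeasurable
    -- pointwise bound on the distribution function
    have hpt : ∀ t ∈ Ioi (0:ℝ), (μ.restrict A) {x | t < ‖u x‖ ^ 2}
        ≤ (Ioc (0:ℝ) t₀).indicator (fun _ => ENNReal.ofReal a) t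
          + (Ioc t₀ (t₀ * B)).indicator (fun t => ENNReal.ofReal (W ^ 2 / t)) t := by
      intro t ht
      have ht0 : 0 < t := ht
      rcases le_or_gt t t₀ with h1 | h1
      · -- use measure of A
        have hb : (μ.restrict A) {x | t < ‖u x‖ ^ 2} ≤ ENNReal.ofReal a := by
          rw [Measure.restrict_apply' hA]
          exact le_trans (measure_mono inter_subset_right) hμA
        calc (μ.restrict A) {x | t < ‖u x‖ ^ 2}
            ≤ (Ioc (0:ℝ) t₀).indicator (fun _ => ENNReal.ofReal a) t := by
              rwa [Set.indicator_of_mem (show t ∈ Ioc (0:ℝ) t₀ from ⟨ht0, h1⟩)]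
          _ ≤ _ := le_self_add
      rcases le_or_gt t (t₀ * B) with h2 | h2
      · -- use the weak bound
        have hsub : {x | t < ‖u x‖ ^ 2} ⊆ {x | Real.sqrt t < ‖u x‖} := by
          intro x hx
          have hx' : t < ‖u x‖ ^ 2 := hx
          have habs : 0 < ‖u x‖ := by
            by_contra h
            push_neg at h
            have : ‖u x‖ = 0 := le_antisymm h (norm_nonneg _)
            rw [this] at hx'; nlinarith
          exact (Real.sqrt_lt' habs).mpr hx'
        have hb : (μ.restrict A) {x | t < ‖u x‖ ^ 2}
            ≤ ENNReal.ofReal (W ^ 2 / t) := by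
          rw [Measure.restrict_apply' hA]
          refine le_trans (measure_mono (inter_subset_left.trans hsub)) ?_
          have := hweak (Real.sqrt t) (Real.sqrt_pos.mpr ht0)
          rwa [Real.sq_sqrt ht0.le] at this
        calc (μ.restrict A) {x | t < ‖u x‖ ^ 2}
            ≤ (Ioc t₀ (t₀ * B)).indicator (fun t => ENNReal.ofReal (W ^ 2 / t)) t := by
              rwa [Set.indicator_of_mem (show t ∈ Ioc t₀ (t₀ * B) from ⟨h1, h2⟩)]
          _ ≤ _ := le_add_self
      · -- the set is empty
        have hempty : {x | t < ‖u x‖ ^ 2} ∩ A = ∅ := by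
          ext x
          simp only [mem_inter_iff, mem_setOf_eq, mem_empty_iff_false, iff_false, not_and]
          intro hx hxA
          have h3 := hbd x hxA
          have h4 : ‖u x‖ ^ 2 ≤ M ^ 2 := by
            have := norm_nonneg (u x)
            nlinarith
          nlinarith
        rw [Measure.restrict_apply' hA, hempty]
        simp
    calc (∫⁻ x in A, ENNReal.ofReal (‖u x‖ ^ 2) ∂μ)
        = ∫⁻ t in Ioi (0:ℝ), (μ.restrict A) {x | t < ‖u x‖ ^ 2} := hlayer
      _ ≤ ∫⁻ t in Ioi (0:ℝ),
            ((Ioc (0:ℝ) t₀).indicator (fun _ => ENNReal.ofReal a) t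
            + (Ioc t₀ (t₀ * B)).indicator (fun t => ENNReal.ofReal (W ^ 2 / t)) t) :=
          setLIntegral_mono' measurableSet_Ioi hpt
      _ ≤ ENNReal.ofReal (W ^ 2 + W ^ 2 * Real.log B) :=
          aux_integral W a t₀ B hWpos ha ht₀ hB1 hat
      _ ≤ ENNReal.ofReal ((1 + Real.log (1 + C₀ * C₁ ^ 2) + 2 * α + 2 * ρ) * W ^ 2 * R) := by
          apply ENNReal.ofReal_le_ofReal
          have hlogB : Real.log B = Real.log (1 + C₀ * C₁ ^ 2) + (2 * α + 2 * ρ) * R := by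
            rw [hBdef, Real.log_mul (ne_of_gt (by nlinarith : (0:ℝ) < 1 + C₀ * C₁ ^ 2)) (Real.exp_ne_zero _), Real.log_exp]
          rw [hlogB]
          have hW2 : (0:ℝ) ≤ W ^ 2 := sq_nonneg W
          nlinarith [mul_nonneg (mul_nonneg hW2
            (show (0:ℝ) ≤ 1 + Real.log (1 + C₀ * C₁ ^ 2) by linarith))
            (sub_nonneg.mpr hR),
            mul_nonneg (mul_nonneg hW2 (by linarith : (0:ℝ) ≤ 2 * α + 2 * ρ))
            (sub_nonneg.mpr hR)]
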